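/- Let T be a bounded operator on a complex Hilbert space with T² = 0. If σ(Re T) ⊆ [0,∞) or σ(Re T) ⊆ (-∞,0] or σ(Im T) ⊆ [0,∞) or σ(Im T) ⊆ (-∞,0], then T = 0. -/

import Mathlib

set_option synthInstance.maxHeartbeats 1000000
set_option maxHeartbeats 1000000

open ContinuousLinearMap Complex

section Aux

variable {H : Type*} [NormedAddCommGroup H] [InnerProductSpace ℂ H] [CompleteSpace H]

local notation "⟪" x ", " y "⟫" => @inner ℂ _ _ x y

private lemma quad_aux' (a b : ℝ) (h : ∀ t : ℝ, 0 ≤ t * a + t ^ 2 * b) : a = 0 := by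
  by_contra ha
  have h1 := h (-a / (1 + b ^ 2))
  have h2 : (0:ℝ) < 1 + b ^ 2 := by positivity
  rw [div_pow] at h1
  rw [div_mul_eq_mul_div, div_mul_eq_mul_div, div_add_div _ _ (ne_of_gt h2) (by positivity),
    le_div_iff₀ (by positivity)] at h1
  have ha2 : 0 < a^2 := by positivity
  have hb : b - 1 - b^2 < 0 := by nlinarith [sq_nonneg (2*b-1)]
  nlinarith [mul_pos (mul_pos ha2 h2) (neg_pos.mpr hb), mul_pos h2 h2]

private lemma sa_re' (T : H →L[ℂ] H) : IsSelfAdjoint ((2 : ℂ)⁻¹ • (T + adjoint T)) := by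
  rw [isSelfAdjoint_iff, star_smul, star_add]
  simp [star_eq_adjoint, adjoint_adjoint, add_comm]

private lemma sa_im' (T : H →L[ℂ] H) :
    IsSelfAdjoint ((2 * Complex.I)⁻¹ • (T - adjoint T)) := by
  rw [isSelfAdjoint_iff, star_smul, star_sub]
  simp only [star_eq_adjoint, adjoint_adjoint]
  have : star (2 * Complex.I)⁻¹ = -(2 * Complex.I)⁻¹ := by
    rw [Complex.star_def, map_inv₀, map_mul, Complex.conj_I, map_ofNat, mul_neg, inv_neg]
  rw [this]
  module

private lemma Ty_eq' (T : H →L[ℂ] H) (hsq : T ^ 2 = 0) (y : H) (c : ℂ) :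
    T (T y + c • y) = c • T y := by
  have : T (T y) = 0 := by
    have := congrArg (fun S : H →L[ℂ] H => S y) hsq
    simpa [pow_two, mul_apply] using this
  simp [map_add, map_smul, this]

private lemma aux_re' (T : H →L[ℂ] H) (hsq : T ^ 2 = 0)
    (h : ∀ x : H, 0 ≤ (⟪x, T x⟫).re) : T = 0 := by
  ext y
  rw [zero_apply, ← norm_eq_zero]
  have key : ∀ t : ℝ, 0 ≤ t * ‖T y‖ ^ 2 + t ^ 2 * (⟪y, T y⟫).re := by
    intro t
    have e : (⟪T y + (t:ℂ) • y, T (T y + (t:ℂ) • y)⟫).re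
        = t * ‖T y‖ ^ 2 + t ^ 2 * (⟪y, T y⟫).re := by
      rw [Ty_eq' T hsq y, inner_smul_right, inner_add_left, inner_smul_left,
        inner_self_eq_norm_sq_to_K]
      simp [Complex.mul_re, Complex.add_re, Complex.add_im, Complex.mul_im,
        ← Complex.ofReal_pow]
      ring
    linarith [h (T y + (t:ℂ) • y), e]
  have := quad_aux' _ _ key
  exact pow_eq_zero_iff (n := 2) (by norm_num) |>.mp this

private lemma aux_im' (T : H →L[ℂ] H) (hsq : T ^ 2 = 0)
    (h : ∀ x : H, 0 ≤ (⟪x, T x⟫).im) : T = 0 := by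
  ext y
  rw [zero_apply, ← norm_eq_zero]
  have key : ∀ t : ℝ, 0 ≤ t * ‖T y‖ ^ 2 + t ^ 2 * (⟪y, T y⟫).im := by
    intro t
    have e : (⟪T y + ((t:ℂ) * Complex.I) • y, T (T y + ((t:ℂ) * Complex.I) • y)⟫).im
        = t * ‖T y‖ ^ 2 + t ^ 2 * (⟪y, T y⟫).im := by
      rw [Ty_eq' T hsq y, inner_smul_right, inner_add_left, inner_smul_left,
        inner_self_eq_norm_sq_to_K]
      simp [Complex.mul_re, Complex.add_re, Complex.add_im, Complex.mul_im,
        ← Complex.ofReal_pow]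
      ring
    linarith [h (T y + ((t:ℂ) * Complex.I) • y), e]
  have := quad_aux' _ _ key
  exact pow_eq_zero_iff (n := 2) (by norm_num) |>.mp this

private lemma sc1' (z : ℂ) : ((2:ℂ)⁻¹ * (z + (starRingEnd ℂ) z)).re = z.re := by
  simp [Complex.mul_re, Complex.inv_re, Complex.inv_im, Complex.normSq]
  ring

private lemma sc2' (z : ℂ) :
    ((2 * Complex.I)⁻¹ * (z - (starRingEnd ℂ) z)).re = z.im := by
  simp [Complex.ext_iff, Complex.mul_re, Complex.inv_re, Complex.inv_im, Complex.normSq]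
  ring

private lemma pos_of_spec' (A : H →L[ℂ] H) (hA : IsSelfAdjoint A)
    (h : spectrum ℝ A ⊆ Set.Ici 0) : ∀ x : H, 0 ≤ (⟪x, A x⟫).re := by
  have : (0 : H →L[ℂ] H) ≤ A :=
    (StarOrderedRing.nonneg_iff_spectrum_nonneg (R := ℝ) A hA).mpr fun x hx => h hx
  exact fun x => (Complex.nonneg_iff.mp (((ContinuousLinearMap.nonneg_iff_isPositive A).mp this).inner_nonneg_right x)).1

private lemma case_re' (T : H →L[ℂ] H) (hsq : T ^ 2 = 0)
    (h : spectrum ℝ ((2 : ℂ)⁻¹ • (T + adjoint T)) ⊆ Set.Ici 0) : T = 0 := by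
  apply aux_re' T hsq
  intro x
  have h1 := pos_of_spec' _ (sa_re' T) h x
  rw [smul_apply, add_apply, inner_smul_right, inner_add_right, adjoint_inner_right,
    ← inner_conj_symm (T x) x] at h1
  rw [sc1'] at h1
  exact h1

private lemma case_im' (T : H →L[ℂ] H) (hsq : T ^ 2 = 0)
    (h : spectrum ℝ ((2 * Complex.I)⁻¹ • (T - adjoint T)) ⊆ Set.Ici 0) : T = 0 := by
  apply aux_im' T hsq
  intro x
  have h1 := pos_of_spec' _ (sa_im' T) h x
  rw [smul_apply, sub_apply, inner_smul_right, inner_sub_right, adjoint_inner_right,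
    ← inner_conj_symm (T x) x] at h1
  rw [sc2'] at h1
  exact h1

end Aux

open ContinuousLinearMap in
theorem eq_zero_of_sq_eq_zero_of_spectrum_semidefinite
    {H : Type*} [NormedAddCommGroup H] [InnerProductSpace ℂ H] [CompleteSpace H]
    (T : H →L[ℂ] H) (hsq : T ^ 2 = 0)
    (h : spectrum ℝ ((2 : ℂ)⁻¹ • (T + ContinuousLinearMap.adjoint T)) ⊆ Set.Ici 0 ∨
         spectrum ℝ ((2 : ℂ)⁻¹ • (T + ContinuousLinearMap.adjoint T)) ⊆ Set.Iic 0 ∨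
         spectrum ℝ ((2 * Complex.I)⁻¹ • (T - ContinuousLinearMap.adjoint T)) ⊆ Set.Ici 0 ∨
         spectrum ℝ ((2 * Complex.I)⁻¹ • (T - ContinuousLinearMap.adjoint T)) ⊆ Set.Iic 0) :
    T = 0 := by
  have hsqneg : (-T) ^ 2 = 0 := by rw [neg_pow_two]; exact hsq
  rcases h with h | h | h | h
  · exact case_re' T hsq h
  · have hneg : spectrum ℝ ((2 : ℂ)⁻¹ • (-T + adjoint (-T))) ⊆ Set.Ici 0 := by
      have heq : (2 : ℂ)⁻¹ • (-T + adjoint (-T))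
          = -((2 : ℂ)⁻¹ • (T + adjoint T)) := by
        rw [map_neg]; module
      rw [heq, ← spectrum.neg_eq]
      intro x hx
      simp only [Set.mem_neg] at hx
      exact Set.mem_Ici.mpr (neg_nonpos.mp (Set.mem_Iic.mp (h hx)))
    have := case_re' (-T) hsqneg hneg
    rwa [neg_eq_zero] at this
  · exact case_im' T hsq h
  · have hneg : spectrum ℝ ((2 * Complex.I)⁻¹ • (-T - adjoint (-T))) ⊆ Set.Ici 0 := by
      have heq : (2 * Complex.I)⁻¹ • (-T - adjoint (-T))
          = -((2 * Complex.I)⁻¹ • (T - adjoint T)) := by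
        rw [map_neg]; module
      rw [heq, ← spectrum.neg_eq]
      intro x hx
      simp only [Set.mem_neg] at hx
      exact Set.mem_Ici.mpr (neg_nonpos.mp (Set.mem_Iic.mp (h hx)))
    have := case_im' (-T) hsqneg hneg
    rwa [neg_eq_zero] at this
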